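/- Let Ω ⊆ ℝ³ be an open set and ω ∈ ℂ with ω ≠ 0. Let ε, μ : Ω → ℂ^{3×3} be of class C¹, E, H : Ω → ℂ³ of class C¹, J_m : Ω → ℂ³ of class C¹ and J_e : Ω → ℂ³ continuous, and assume the time-harmonic Maxwell system holds pointwise on Ω: curl H = iωεE + J_e and curl E = −iωμH + J_m. Then for every k ∈ {1,2,3} and every compactly supported test function φ ∈ C²_c(Ω;ℂ) there holds the very weak identity ∫_Ω H_k div(μᵀ ∇φ̄) dx = ∫_Ω ((∂_k μ)H − μ(e_k × (J_e + iωεE)) + (i/ω) e_k div J_m) · ∇φ̄ dx, where φ̄ denotes the complex conjugate of φ, dx is Lebesgue measure on ℝ³ and a·b = Σ_j a_j b_j (no conjugation). -/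

import Mathlib

open Matrix MeasureTheory Set Filter
open scoped Manifold

noncomputable section

/-- Partial derivative of a scalar function in the j-th coordinate direction. -/
def pd3 (j : Fin 3) (f : (Fin 3 → ℝ) → ℂ) (x : Fin 3 → ℝ) : ℂ :=
  fderiv ℝ f x (Pi.single j 1)

/-- Divergence of a vector field. -/
def vdiv (F : (Fin 3 → ℝ) → Fin 3 → ℂ) (x : Fin 3 → ℝ) : ℂ :=
  ∑ j : Fin 3, pd3 j (fun y => F y j) x

/-- Curl of a vector field. -/
def vcurl (F : (Fin 3 → ℝ) → Fin 3 → ℂ) (x : Fin 3 → ℝ) : Fin 3 → ℂ :=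
  ![pd3 1 (fun y => F y 2) x - pd3 2 (fun y => F y 1) x,
    pd3 2 (fun y => F y 0) x - pd3 0 (fun y => F y 2) x,
    pd3 0 (fun y => F y 1) x - pd3 1 (fun y => F y 0) x]

/-- Gradient of a scalar function. -/
def grad3 (u : (Fin 3 → ℝ) → ℂ) (x : Fin 3 → ℝ) : Fin 3 → ℂ := fun j => pd3 j u x

/-- Cross product on ℂ³. -/
def cross3 (a b : Fin 3 → ℂ) : Fin 3 → ℂ :=
  ![a 1 * b 2 - a 2 * b 1, a 2 * b 0 - a 0 * b 2, a 0 * b 1 - a 1 * b 0]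

/-- The k-th standard basis vector of ℝ³ viewed in ℂ³. -/
def e3 (k : Fin 3) : Fin 3 → ℂ := Pi.single k 1

/-- Entrywise partial derivative of a matrix field in the k-th direction. -/
def mpd3 (k : Fin 3) (a : (Fin 3 → ℝ) → Matrix (Fin 3) (Fin 3) ℂ) (x : Fin 3 → ℝ) :
    Matrix (Fin 3) (Fin 3) ℂ :=
  Matrix.of fun i j => pd3 k (fun y => a y i j) x


abbrev R3 := Fin 3 → ℝ

lemma pd3_congr {f g : R3 → ℂ} {x : R3} (h : f =ᶠ[nhds x] g) (j : Fin 3) :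
    pd3 j f x = pd3 j g x := by unfold pd3; rw [h.fderiv_eq]

lemma pd3_zero (j : Fin 3) (x : R3) : pd3 j (fun _ => (0:ℂ)) x = 0 := by
  unfold pd3; rw [fderiv_fun_const]; simp

lemma pd3_eq_zero_of_not_mem_tsupport {f : R3 → ℂ} {x : R3} (h : x ∉ tsupport f) (j : Fin 3) :
    pd3 j f x = 0 := by
  rw [show f = fun y => f y from rfl] at h ⊢
  rw [pd3_congr (notMem_tsupport_iff_eventuallyEq.mp h) j]
  exact pd3_zero j x

lemma pd3_add {f g : R3 → ℂ} {x : R3} (hf : DifferentiableAt ℝ f x)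
    (hg : DifferentiableAt ℝ g x) (j : Fin 3) :
    pd3 j (fun y => f y + g y) x = pd3 j f x + pd3 j g x := by
  unfold pd3; rw [fderiv_fun_add hf hg]; simp

lemma pd3_mul {f g : R3 → ℂ} {x : R3} (hf : DifferentiableAt ℝ f x)
    (hg : DifferentiableAt ℝ g x) (j : Fin 3) :
    pd3 j (fun y => f y * g y) x = pd3 j f x * g x + f x * pd3 j g x := by
  unfold pd3; rw [fderiv_fun_mul hf hg]; simp; ring

lemma pd3_const_mul {f : R3 → ℂ} {x : R3} (hf : DifferentiableAt ℝ f x) (c : ℂ) (j : Fin 3) :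
    pd3 j (fun y => c * f y) x = c * pd3 j f x := by
  unfold pd3; rw [fderiv_const_mul hf]; simp

lemma pd3_sum {s : Finset (Fin 3)} {F : Fin 3 → R3 → ℂ} {x : R3}
    (hF : ∀ i ∈ s, DifferentiableAt ℝ (F i) x) (j : Fin 3) :
    pd3 j (fun y => ∑ i ∈ s, F i y) x = ∑ i ∈ s, pd3 j (F i) x := by
  unfold pd3; rw [fderiv_fun_sum hF]; simp

lemma contDiff_pd3_of_two {f : R3 → ℂ} (hf : ContDiff ℝ 2 f) (j : Fin 3) :
    ContDiff ℝ 1 (pd3 j f) :=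
  (hf.fderiv_right (by norm_num)).clm_apply contDiff_const

lemma continuous_pd3 {f : R3 → ℂ} (hf : ContDiff ℝ 1 f) (j : Fin 3) :
    Continuous (pd3 j f) :=
  (hf.continuous_fderiv one_ne_zero).clm_apply continuous_const

lemma hasCompactSupport_pd3 {f : R3 → ℂ} (hf : HasCompactSupport f) (j : Fin 3) :
    HasCompactSupport (pd3 j f) := by
  apply IsCompact.of_isClosed_subset hf isClosed_closure
  apply closure_minimal _ isClosed_closure
  intro x hx
  by_contra hxc
  exact hx (pd3_eq_zero_of_not_mem_tsupport hxc j)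

lemma schwarz {f : R3 → ℂ} (hf : ContDiff ℝ 2 f) (i k : Fin 3) (x : R3) :
    pd3 i (pd3 k f) x = pd3 k (pd3 i f) x := by
  have hd : DifferentiableAt ℝ (fderiv ℝ f) x :=
    ((hf.fderiv_right (by norm_num : (1:WithTop ℕ∞) + 1 ≤ 2)).differentiable one_ne_zero).differentiableAt
  have hsymm := ((hf.contDiffAt (x := x)).isSymmSndFDerivAt (by norm_num)).eq (Pi.single i 1) (Pi.single k 1)
  have h1 : ∀ a b : Fin 3, pd3 a (pd3 b f) x = fderiv ℝ (fderiv ℝ f) x (Pi.single a 1) (Pi.single b 1) := by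
    intro a b
    unfold pd3
    rw [fderiv_clm_apply hd (differentiableAt_const _)]
    simp
  rw [h1, h1, hsymm]

lemma integral_pd3_eq_zero {u : R3 → ℂ} (hu : ContDiff ℝ 1 u) (hs : HasCompactSupport u)
    (j : Fin 3) : ∫ x, pd3 j u x = 0 := by
  obtain ⟨r, hr⟩ := hs.isBounded.subset_ball (0 : R3)
  set R : ℝ := max r 1 with hR
  have hR0 : 0 < R := lt_of_lt_of_le one_pos (le_max_right _ _)
  have hsub : tsupport u ⊆ Metric.ball (0 : R3) R :=
    hr.trans (Metric.ball_subset_ball (le_max_left _ _))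
  set a : R3 := fun _ => -R with ha
  set b : R3 := fun _ => R with hb
  have hle : a ≤ b := fun i => by simp [ha, hb]; linarith
  have hIcc : tsupport u ⊆ Icc a b := by
    intro x hx
    have hd : dist x 0 < R := Metric.mem_ball.mp (hsub hx)
    constructor <;> intro i <;>
    · have hi := le_of_lt (lt_of_le_of_lt (dist_le_pi_dist x (0:R3) i) hd)
      rw [Real.dist_eq] at hi
      simp only [Pi.zero_apply, sub_zero] at hi
      have := abs_le.mp hi
      simp only [ha, hb]
      first | linarith [this.1] | linarith [this.2]
  -- the family for the divergence theorem
  have key := integral_divergence_of_hasFDerivAt_off_countable' (n := 2) a b hle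
      (fun i => if i = j then u else fun _ => 0)
      (fun i x => if i = j then fderiv ℝ u x else 0) ∅ countable_empty
      (fun i => by
        by_cases h : i = j <;> simp [h]
        · exact (hu.continuous).continuousOn
        · exact continuousOn_const)
      (fun x _ i => by
        by_cases h : i = j <;> simp [h]
        · exact (hu.differentiable one_ne_zero x).hasFDerivAt
        · exact hasFDerivAt_const _ _)
      (by
        apply Continuous.integrableOn_Icc
        apply continuous_finset_sum
        intro i _
        by_cases h : i = j <;> simp [h]
        · exact continuous_pd3 hu j
        · exact continuous_const)
  -- boundary terms vanish
  have hbound : ∀ (i : Fin 3) (c : ℝ), |c| = R → ∀ (y : Fin 2 → ℝ),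
      u (Fin.insertNth i c y) = 0 := by
    intro i c hc y
    have : Fin.insertNth i c y ∉ tsupport u := by
      intro hmem
      have h1 := hsub hmem
      rw [Metric.mem_ball] at h1
      have h2 := dist_le_pi_dist (Fin.insertNth i c y) (0:R3) i
      rw [Fin.insertNth_apply_same] at h2
      simp only [Pi.zero_apply, Real.dist_eq, sub_zero, hc] at h2
      linarith
    exact image_eq_zero_of_notMem_tsupport this
  have hfaces : ∑ i : Fin 3, ((∫ x in Icc (a ∘ Fin.succAbove i) (b ∘ Fin.succAbove i),
      (if i = j then u else fun _ => 0) (Fin.insertNth i (b i) x)) -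
      ∫ x in Icc (a ∘ Fin.succAbove i) (b ∘ Fin.succAbove i),
      (if i = j then u else fun _ => 0) (Fin.insertNth i (a i) x)) = 0 := ?_
  · rw [hfaces] at key
    have hsum : ∀ x : R3, (∑ i : Fin 3,
        (if i = j then fderiv ℝ u x else 0) (Pi.single i (1:ℝ))) = pd3 j u x := by
      intro x
      rw [Finset.sum_eq_single j]
      · simp [pd3]
      · intro i _ hij; simp [hij]
      · simp
    have h1 : ∫ x in Icc a b, pd3 j u x
        = ∫ x in Icc a b, ∑ i : Fin 3, (if i = j then fderiv ℝ u x else 0) (Pi.single i (1:ℝ)) :=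
      setIntegral_congr_fun measurableSet_Icc (fun x _ => (hsum x).symm)
    rw [← setIntegral_eq_integral_of_forall_compl_eq_zero
      (fun x hx => pd3_eq_zero_of_not_mem_tsupport (fun hmem => hx (hIcc hmem)) j), h1]
    exact key
  · apply Finset.sum_eq_zero
    intro i _
    by_cases h : i = j <;> simp only [h, if_true, if_false]
    · subst h
      rw [setIntegral_congr_fun measurableSet_Icc (g := fun _ => (0:ℂ))
          (fun y _ => hbound i (b i) (by simp [hb, abs_of_pos hR0]) y),
        setIntegral_congr_fun measurableSet_Icc (g := fun _ => (0:ℂ))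
          (fun y _ => hbound i (a i) (by simp [ha, abs_of_pos hR0]) y)]
      simp
    · simp

lemma intg {f g : R3 → ℂ} (hf : Continuous f) (hg : Continuous g)
    (hsupp : HasCompactSupport g) : Integrable (fun x => f x * g x) :=
  (hf.mul hg).integrable_of_hasCompactSupport hsupp.mul_left

lemma ibp {f g : R3 → ℂ} (hf : ContDiff ℝ 1 f) (hg : ContDiff ℝ 1 g)
    (hgs : HasCompactSupport g) (j : Fin 3) :
    ∫ x, pd3 j f x * g x = - ∫ x, f x * pd3 j g x := by
  have h0 := integral_pd3_eq_zero (hf.mul hg) hgs.mul_left j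
  have hpt : (fun x => pd3 j (fun y => f y * g y) x)
      = fun x => pd3 j f x * g x + f x * pd3 j g x := by
    funext x
    exact pd3_mul (hf.differentiable one_ne_zero x) (hg.differentiable one_ne_zero x) j
  rw [hpt, integral_add (intg (continuous_pd3 hf j) hg.continuous hgs)
    (intg hf.continuous (continuous_pd3 hg j) (hasCompactSupport_pd3 hgs j))] at h0
  linear_combination h0

lemma divcurl {U : Set R3} (hU : IsOpen U) (e G : R3 → Fin 3 → ℂ)
    (he : ∀ i, ContDiff ℝ 1 (fun x => e x i)) (hG : ∀ i, ContDiff ℝ 1 (fun x => G x i))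
    (heG : ∀ x ∈ U, vcurl e x = G x) :
    ∀ᵐ x, x ∈ U → vdiv G x = 0 := by
  apply hU.ae_eq_zero_of_integral_contDiff_smul_eq_zero
  · have hc : Continuous (fun x => vdiv G x) := by
      unfold vdiv
      apply continuous_finset_sum
      intro j _
      exact continuous_pd3 (hG j) j
    exact hc.locallyIntegrable.locallyIntegrableOn _
  · intro g hg hgs hgU
    set gc : R3 → ℂ := fun x => (g x : ℂ) with hgc_def
    have hgc : ContDiff ℝ 2 gc := Complex.ofRealCLM.contDiff.comp (hg.of_le (by norm_cast))
    have hgc1 : ContDiff ℝ 1 gc := hgc.of_le (by norm_num)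
    have hgcs : HasCompactSupport gc := hgs.comp_left (g := fun r : ℝ => (r:ℂ)) (by simp)
    have hgcU : tsupport gc ⊆ U := by
      refine (closure_mono ?_).trans hgU
      intro x hx
      simp only [hgc_def, Function.mem_support, ne_eq, Complex.ofReal_eq_zero] at hx
      exact hx
    have int1 : ∀ j : Fin 3, Integrable (fun x => pd3 j (fun y => G y j) x * gc x) :=
      fun j => intg (continuous_pd3 (hG j) j) hgc1.continuous hgcs
    have int2 : ∀ j : Fin 3, Integrable (fun x => G x j * pd3 j gc x) :=
      fun j => intg (hG j).continuous (continuous_pd3 hgc1 j) (hasCompactSupport_pd3 hgcs j)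
    have ha : ∫ x, g x • vdiv G x = ∑ j : Fin 3, ∫ x, pd3 j (fun y => G y j) x * gc x := by
      rw [← integral_finset_sum _ (fun j _ => int1 j)]
      congr 1; funext x
      simp only [vdiv, Finset.smul_sum]
      congr 1; funext j
      rw [hgc_def]; rw [Complex.real_smul]; ring
    have hb : ∀ j : Fin 3, ∫ x, pd3 j (fun y => G y j) x * gc x
        = - ∫ x, G x j * pd3 j gc x := fun j => ibp (hG j) hgc1 hgcs j
    rw [ha]
    simp_rw [hb]
    rw [Finset.sum_neg_distrib, ← integral_finset_sum _ (fun j _ => int2 j), neg_eq_zero]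
    have hrepl : (fun x => ∑ j : Fin 3, G x j * pd3 j gc x)
        = fun x => ∑ j : Fin 3, vcurl e x j * pd3 j gc x := by
      funext x
      by_cases hx : x ∈ U
      · rw [heG x hx]
      · have hz : ∀ j : Fin 3, pd3 j gc x = 0 := fun j =>
          pd3_eq_zero_of_not_mem_tsupport (fun hmem => hx (hgcU hmem)) j
        simp [hz]
    rw [hrepl]
    have I : ∀ a b c : Fin 3, Integrable (fun x => pd3 a (fun y => e y b) x * pd3 c gc x) :=
      fun a b c => intg (continuous_pd3 (he b) a) (continuous_pd3 hgc1 c)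
        (hasCompactSupport_pd3 hgcs c)
    have key : ∀ a b c : Fin 3, ∫ x, pd3 a (fun y => e y b) x * pd3 c gc x
        = - ∫ x, e x b * pd3 a (pd3 c gc) x :=
      fun a b c => ibp (he b) (contDiff_pd3_of_two hgc c) (hasCompactSupport_pd3 hgcs c) a
    have sym : ∀ b a c : Fin 3, (∫ x, e x b * pd3 a (pd3 c gc) x)
        = ∫ x, e x b * pd3 c (pd3 a gc) x := by
      intro b a c
      refine integral_congr_ae (.of_forall fun x => ?_)
      show e x b * pd3 a (pd3 c gc) x = e x b * pd3 c (pd3 a gc) x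
      rw [schwarz hgc a c x]
    have expand : (fun x => ∑ j : Fin 3, vcurl e x j * pd3 j gc x) = fun x =>
        (pd3 1 (fun y => e y 2) x * pd3 0 gc x - pd3 2 (fun y => e y 1) x * pd3 0 gc x)
      + (pd3 2 (fun y => e y 0) x * pd3 1 gc x - pd3 0 (fun y => e y 2) x * pd3 1 gc x)
      + (pd3 0 (fun y => e y 1) x * pd3 2 gc x - pd3 1 (fun y => e y 0) x * pd3 2 gc x) := by
      funext x
      simp [vcurl, Fin.sum_univ_three]
      ring
    rw [expand]
    have I1 : Integrable (fun x => pd3 1 (fun y => e y 2) x * pd3 0 gc x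
        - pd3 2 (fun y => e y 1) x * pd3 0 gc x) := (I 1 2 0).sub (I 2 1 0)
    have I2 : Integrable (fun x => pd3 2 (fun y => e y 0) x * pd3 1 gc x
        - pd3 0 (fun y => e y 2) x * pd3 1 gc x) := (I 2 0 1).sub (I 0 2 1)
    have I3 : Integrable (fun x => pd3 0 (fun y => e y 1) x * pd3 2 gc x
        - pd3 1 (fun y => e y 0) x * pd3 2 gc x) := (I 0 1 2).sub (I 1 0 2)
    have I12 : Integrable (fun x => (pd3 1 (fun y => e y 2) x * pd3 0 gc x
        - pd3 2 (fun y => e y 1) x * pd3 0 gc x)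
      + (pd3 2 (fun y => e y 0) x * pd3 1 gc x - pd3 0 (fun y => e y 2) x * pd3 1 gc x)) :=
      I1.add I2
    rw [integral_add I12 I3, integral_add I1 I2,
      integral_sub (I 1 2 0) (I 2 1 0), integral_sub (I 2 0 1) (I 0 2 1),
      integral_sub (I 0 1 2) (I 1 0 2),
      key 1 2 0, key 2 1 0, key 2 0 1, key 0 2 1, key 0 1 2, key 1 0 2]
    linear_combination (sym 1 2 0) - (sym 2 1 0) - (sym 0 2 1)

lemma ibp' {f g : R3 → ℂ} (hf : ContDiff ℝ 1 f) (hg : ContDiff ℝ 1 g)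
    (hgs : HasCompactSupport g) (j : Fin 3) :
    ∫ x, f x * pd3 j g x = - ∫ x, pd3 j f x * g x := by
  have := ibp hf hg hgs j; linear_combination this

lemma flip_ibp {f ψ : R3 → ℂ} (hf : ContDiff ℝ 1 f) (hψ : ContDiff ℝ 2 ψ)
    (hψs : HasCompactSupport ψ) (i k : Fin 3) :
    ∫ x, pd3 k f x * pd3 i ψ x = ∫ x, pd3 i f x * pd3 k ψ x := by
  rw [ibp hf (contDiff_pd3_of_two hψ i) (hasCompactSupport_pd3 hψs i) k,
      ibp hf (contDiff_pd3_of_two hψ k) (hasCompactSupport_pd3 hψs k) i]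
  congr 1
  refine integral_congr_ae (.of_forall fun x => ?_)
  show f x * pd3 k (pd3 i ψ) x = f x * pd3 i (pd3 k ψ) x
  rw [schwarz hψ k i x]

lemma main_identity {U : Set R3} (hU : IsOpen U) (ω : ℂ) (hω : ω ≠ 0)
    (A : R3 → Matrix (Fin 3) (Fin 3) ℂ) (h e jm : R3 → Fin 3 → ℂ) (ψ : R3 → ℂ)
    (hA : ∀ i j, ContDiff ℝ 1 (fun x => A x i j))
    (hh : ∀ i, ContDiff ℝ 1 (fun x => h x i))
    (he : ∀ i, ContDiff ℝ 1 (fun x => e x i))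
    (hjm : ∀ i, ContDiff ℝ 1 (fun x => jm x i))
    (hψ : ContDiff ℝ 2 ψ) (hψs : HasCompactSupport ψ) (hψU : tsupport ψ ⊆ U)
    (hrel : ∀ x ∈ U, vcurl e x = -((Complex.I * ω) • (A x *ᵥ h x)) + jm x) (k : Fin 3) :
    ∫ x, h x k * vdiv (fun y => (A y)ᵀ *ᵥ grad3 ψ y) x
      = ∫ x, (mpd3 k A x *ᵥ h x - A x *ᵥ cross3 (e3 k) (vcurl h x)
          + ((Complex.I / ω) * vdiv jm x) • e3 k) ⬝ᵥ grad3 ψ x := by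
  have hPc : ∀ i : Fin 3, ContDiff ℝ 1 (pd3 i ψ) := fun i => contDiff_pd3_of_two hψ i
  have hPs : ∀ i : Fin 3, HasCompactSupport (pd3 i ψ) := fun i => hasCompactSupport_pd3 hψs i
  have haP : ∀ i j : Fin 3, ContDiff ℝ 1 (fun y => A y i j * pd3 i ψ y) :=
    fun i j => (hA i j).mul (hPc i)
  have haPs : ∀ i j : Fin 3, HasCompactSupport (fun y => A y i j * pd3 i ψ y) :=
    fun i j => (hPs i).mul_left
  have hah : ∀ i j : Fin 3, ContDiff ℝ 1 (fun y => A y i j * h y j) :=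
    fun i j => (hA i j).mul (hh j)
  have cross_id : ∀ (x : R3) (j : Fin 3), cross3 (e3 k) (vcurl h x) j
      = pd3 j (fun y => h y k) x - pd3 k (fun y => h y j) x := by
    intro x j
    fin_cases j <;> fin_cases k <;>
      simp [cross3, e3, vcurl, Pi.single_apply] <;> ring
  have hcrossc : ∀ j : Fin 3, Continuous (fun x => cross3 (e3 k) (vcurl h x) j) := by
    intro j
    refine Continuous.congr ?_ (fun x => (cross_id x j).symm)
    exact (continuous_pd3 (hh k) j).sub (continuous_pd3 (hh j) k)
  have hdjm : Continuous (fun x => vdiv jm x) := by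
    unfold vdiv; exact continuous_finset_sum _ fun j _ => continuous_pd3 (hjm j) j
  -- integrability of building blocks
  have Ii : ∀ j i : Fin 3, Integrable (fun x => h x k * pd3 j (fun y => A y i j * pd3 i ψ y) x) :=
    fun j i => intg (hh k).continuous (continuous_pd3 (haP i j) j)
      (hasCompactSupport_pd3 (haPs i j) j)
  have IC : ∀ j i : Fin 3, Integrable (fun x => A x i j * (cross3 (e3 k) (vcurl h x) j * pd3 i ψ x)) :=
    fun j i => intg (hA i j).continuous ((hcrossc j).mul (hPc i).continuous) (hPs i).mul_left
  have IM : ∀ j i : Fin 3, Integrable (fun x => pd3 k (fun y => A y i j * h y j) x * pd3 i ψ x) :=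
    fun j i => intg (continuous_pd3 (hah i j) k) (hPc i).continuous (hPs i)
  have ID : ∀ j i : Fin 3, Integrable (fun x => pd3 k (fun y => A y i j) x * (h x j * pd3 i ψ x)) :=
    fun j i => intg (continuous_pd3 (hA i j) k) ((hh j).continuous.mul (hPc i).continuous)
      (hPs i).mul_left
  -- Step 1 : LHS expansion
  have L1 : ∫ x, h x k * vdiv (fun y => (A y)ᵀ *ᵥ grad3 ψ y) x
      = ∑ j : Fin 3, ∑ i : Fin 3, ∫ x, h x k * pd3 j (fun y => A y i j * pd3 i ψ y) x := by
    have hfun : (fun x => h x k * vdiv (fun y => (A y)ᵀ *ᵥ grad3 ψ y) x)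
        = fun x => ∑ j : Fin 3, ∑ i : Fin 3, h x k * pd3 j (fun y => A y i j * pd3 i ψ y) x := by
      funext x
      have hvd : vdiv (fun y => (A y)ᵀ *ᵥ grad3 ψ y) x
          = ∑ j : Fin 3, ∑ i : Fin 3, pd3 j (fun y => A y i j * pd3 i ψ y) x := by
        unfold vdiv
        refine Finset.sum_congr rfl fun j _ => ?_
        have hcomp : (fun y => ((A y)ᵀ *ᵥ grad3 ψ y) j)
            = fun y => ∑ i : Fin 3, A y i j * pd3 i ψ y := by
          funext y; simp [Matrix.mulVec, dotProduct, Matrix.transpose_apply, grad3]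
        rw [hcomp, pd3_sum (fun i _ => ((haP i j).differentiable one_ne_zero).differentiableAt) j]
      rw [hvd, Finset.mul_sum]
      exact Finset.sum_congr rfl fun j _ => Finset.mul_sum _ _ _
    rw [hfun, integral_finset_sum _ (fun j _ => integrable_finset_sum _ (fun i _ => Ii j i))]
    exact Finset.sum_congr rfl fun j _ => integral_finset_sum _ (fun i _ => Ii j i)
  -- Step 2 : integrate by parts once
  have L2 : ∀ j i : Fin 3, ∫ x, h x k * pd3 j (fun y => A y i j * pd3 i ψ y) x
      = - ∫ x, pd3 j (fun y => h y k) x * (A x i j * pd3 i ψ x) :=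
    fun j i => ibp' (hh k) (haP i j) (haPs i j) j
  -- Step 3 : pointwise decomposition
  have L3 : ∀ j i : Fin 3, ∫ x, pd3 j (fun y => h y k) x * (A x i j * pd3 i ψ x)
      = (∫ x, A x i j * (cross3 (e3 k) (vcurl h x) j * pd3 i ψ x))
        + (∫ x, pd3 k (fun y => A y i j * h y j) x * pd3 i ψ x)
        - ∫ x, pd3 k (fun y => A y i j) x * (h x j * pd3 i ψ x) := by
    intro j i
    have h12 : Integrable (fun x => A x i j * (cross3 (e3 k) (vcurl h x) j * pd3 i ψ x)
        + pd3 k (fun y => A y i j * h y j) x * pd3 i ψ x) := (IC j i).add (IM j i)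
    rw [← integral_add (IC j i) (IM j i), ← integral_sub h12 (ID j i)]
    refine integral_congr_ae (.of_forall fun x => ?_)
    have hmul : pd3 k (fun y => A y i j * h y j) x
        = pd3 k (fun y => A y i j) x * h x j + A x i j * pd3 k (fun y => h y j) x :=
      pd3_mul (((hA i j).differentiable one_ne_zero).differentiableAt)
        (((hh j).differentiable one_ne_zero).differentiableAt) k
    show pd3 j (fun y => h y k) x * (A x i j * pd3 i ψ x)
        = A x i j * (cross3 (e3 k) (vcurl h x) j * pd3 i ψ x)
          + pd3 k (fun y => A y i j * h y j) x * pd3 i ψ x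
          - pd3 k (fun y => A y i j) x * (h x j * pd3 i ψ x)
    rw [hmul, cross_id x j]; ring
  -- Step 4 : middle sum is the divergence term
  have M1 : ∀ j i : Fin 3, ∫ x, pd3 k (fun y => A y i j * h y j) x * pd3 i ψ x
      = ∫ x, pd3 i (fun y => A y i j * h y j) x * pd3 k ψ x :=
    fun j i => flip_ibp (hah i j) hψ hψs i k
  have IM' : ∀ j i : Fin 3, Integrable (fun x => pd3 i (fun y => A y i j * h y j) x * pd3 k ψ x) :=
    fun j i => intg (continuous_pd3 (hah i j) i) (hPc k).continuous (hPs k)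
  have M2 : ∑ j : Fin 3, ∑ i : Fin 3, ∫ x, pd3 i (fun y => A y i j * h y j) x * pd3 k ψ x
      = ∫ x, vdiv (fun y => A y *ᵥ h y) x * pd3 k ψ x := by
    have hfun : (fun x => vdiv (fun y => A y *ᵥ h y) x * pd3 k ψ x)
        = fun x => ∑ j : Fin 3, ∑ i : Fin 3, pd3 i (fun y => A y i j * h y j) x * pd3 k ψ x := by
      funext x
      have hvd : vdiv (fun y => A y *ᵥ h y) x
          = ∑ i : Fin 3, ∑ j : Fin 3, pd3 i (fun y => A y i j * h y j) x := by
        unfold vdiv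
        refine Finset.sum_congr rfl fun i _ => ?_
        have hcomp : (fun y => (A y *ᵥ h y) i) = fun y => ∑ j : Fin 3, A y i j * h y j := by
          funext y; simp [Matrix.mulVec, dotProduct]
        rw [hcomp, pd3_sum (fun j _ => ((hah i j).differentiable one_ne_zero).differentiableAt) i]
      rw [hvd, Finset.sum_comm, Finset.sum_mul]
      exact Finset.sum_congr rfl fun j _ => Finset.sum_mul _ _ _
    rw [hfun, integral_finset_sum _ (fun j _ => integrable_finset_sum _ (fun i _ => IM' j i))]
    exact Finset.sum_congr rfl fun j _ => (integral_finset_sum _ (fun i _ => IM' j i)).symm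
  have M3 : ∫ x, vdiv (fun y => A y *ᵥ h y) x * pd3 k ψ x
      = ∫ x, (-(Complex.I/ω)) * (vdiv jm x * pd3 k ψ x) := by
    set G : R3 → Fin 3 → ℂ := fun x => -((Complex.I * ω) • (A x *ᵥ h x)) + jm x with hGdef
    have hGexp : ∀ i : Fin 3, (fun x => G x i)
        = fun x => -(Complex.I*ω) * (∑ j : Fin 3, A x i j * h x j) + jm x i := by
      intro i; funext x
      simp [hGdef, Matrix.mulVec, dotProduct, Pi.smul_apply, smul_eq_mul] <;> ring
    have hAhc : ∀ i : Fin 3, ContDiff ℝ 1 (fun x => ∑ j : Fin 3, A x i j * h x j) := by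
      intro i
      apply ContDiff.sum
      intro j _
      exact hah i j
    have hGi : ∀ i, ContDiff ℝ 1 (fun x => G x i) := by
      intro i
      rw [hGexp i]
      exact ((contDiff_const.mul (hAhc i)).add (hjm i))
    have hae := divcurl hU e G he hGi hrel
    refine integral_congr_ae ?_
    filter_upwards [hae] with x hx
    by_cases hxU : x ∈ U
    · have h0 := hx hxU
      have hexp : vdiv G x = -(Complex.I*ω) * vdiv (fun y => A y *ᵥ h y) x + vdiv jm x := by
        unfold vdiv
        have hterm : ∀ i : Fin 3, pd3 i (fun y => G y i) x
            = -(Complex.I*ω) * pd3 i (fun y => (A y *ᵥ h y) i) x + pd3 i (fun y => jm y i) x := by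
          intro i
          rw [hGexp i]
          have hd1 : DifferentiableAt ℝ (fun y => -(Complex.I*ω) * (∑ j : Fin 3, A y i j * h y j)) x :=
            (((contDiff_const.mul (hAhc i)).differentiable one_ne_zero).differentiableAt)
          have hd2 : DifferentiableAt ℝ (fun y => jm y i) x :=
            (((hjm i).differentiable one_ne_zero).differentiableAt)
          have hAh_eq : pd3 i (fun y => (A y *ᵥ h y) i) x
              = pd3 i (fun y => ∑ j : Fin 3, A y i j * h y j) x :=
            pd3_congr (.of_forall fun y => by simp [Matrix.mulVec, dotProduct]) i
          rw [hAh_eq, pd3_add hd1 hd2 i, pd3_const_mul (((hAhc i).differentiable one_ne_zero).differentiableAt) _ i]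
        rw [Finset.sum_congr rfl (fun i _ => hterm i), Finset.sum_add_distrib, ← Finset.mul_sum]
      rw [hexp] at h0
      have hIω : Complex.I * ω ≠ 0 := mul_ne_zero Complex.I_ne_zero hω
      have hsolve : vdiv (fun y => A y *ᵥ h y) x = -(Complex.I/ω) * vdiv jm x := by
        have h1 : (Complex.I*ω) * vdiv (fun y => A y *ᵥ h y) x = vdiv jm x := by
          linear_combination -h0
        have h2 : (Complex.I*ω) * (-(Complex.I/ω) * vdiv jm x) = vdiv jm x := by
          have hstep : Complex.I * ω * (-(Complex.I / ω) * vdiv jm x)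
              = -(Complex.I*Complex.I) * vdiv jm x * (ω / ω) := by ring
          rw [hstep, div_self hω, Complex.I_mul_I]; ring
        exact mul_left_cancel₀ hIω (h1.trans h2.symm)
      show vdiv (fun y => A y *ᵥ h y) x * pd3 k ψ x = -(Complex.I/ω) * (vdiv jm x * pd3 k ψ x)
      rw [hsolve]; ring
    · have hzz : pd3 k ψ x = 0 := pd3_eq_zero_of_not_mem_tsupport (fun hm => hxU (hψU hm)) k
      show vdiv (fun y => A y *ᵥ h y) x * pd3 k ψ x = -(Complex.I/ω) * (vdiv jm x * pd3 k ψ x)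
      rw [hzz]; ring
  -- Step 5 : RHS expansion
  have R1 : ∫ x, (mpd3 k A x *ᵥ h x - A x *ᵥ cross3 (e3 k) (vcurl h x)
          + ((Complex.I / ω) * vdiv jm x) • e3 k) ⬝ᵥ grad3 ψ x
      = (∑ i : Fin 3, ∑ j : Fin 3, ∫ x, pd3 k (fun y => A y i j) x * (h x j * pd3 i ψ x))
        - (∑ i : Fin 3, ∑ j : Fin 3, ∫ x, A x i j * (cross3 (e3 k) (vcurl h x) j * pd3 i ψ x))
        + ∫ x, (Complex.I/ω) * (vdiv jm x * pd3 k ψ x) := by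
    have hfun : (fun x => (mpd3 k A x *ᵥ h x - A x *ᵥ cross3 (e3 k) (vcurl h x)
          + ((Complex.I / ω) * vdiv jm x) • e3 k) ⬝ᵥ grad3 ψ x)
        = fun x => (∑ i : Fin 3, ∑ j : Fin 3, pd3 k (fun y => A y i j) x * (h x j * pd3 i ψ x))
          - (∑ i : Fin 3, ∑ j : Fin 3, A x i j * (cross3 (e3 k) (vcurl h x) j * pd3 i ψ x))
          + (Complex.I/ω) * (vdiv jm x * pd3 k ψ x) := by
      funext x
      show ∑ i : Fin 3, (mpd3 k A x *ᵥ h x - A x *ᵥ cross3 (e3 k) (vcurl h x)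
          + ((Complex.I / ω) * vdiv jm x) • e3 k) i * grad3 ψ x i = _
      have expand_i : ∀ i : Fin 3, (mpd3 k A x *ᵥ h x - A x *ᵥ cross3 (e3 k) (vcurl h x)
          + ((Complex.I / ω) * vdiv jm x) • e3 k) i * grad3 ψ x i
          = ((∑ j : Fin 3, pd3 k (fun y => A y i j) x * (h x j * pd3 i ψ x))
            - (∑ j : Fin 3, A x i j * (cross3 (e3 k) (vcurl h x) j * pd3 i ψ x)))
            + (Complex.I/ω) * vdiv jm x * (e3 k i * pd3 i ψ x) := by
        intro i
        have hcoord : (mpd3 k A x *ᵥ h x - A x *ᵥ cross3 (e3 k) (vcurl h x)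
            + ((Complex.I / ω) * vdiv jm x) • e3 k) i
            = ((∑ j : Fin 3, pd3 k (fun y => A y i j) x * h x j)
              - (∑ j : Fin 3, A x i j * cross3 (e3 k) (vcurl h x) j))
              + (Complex.I/ω) * vdiv jm x * e3 k i := by
          simp [Matrix.mulVec, dotProduct, mpd3, Pi.smul_apply, smul_eq_mul]
        have e1 : (∑ j : Fin 3, pd3 k (fun y => A y i j) x * h x j) * pd3 i ψ x
            = ∑ j : Fin 3, pd3 k (fun y => A y i j) x * (h x j * pd3 i ψ x) := by
          rw [Finset.sum_mul]; exact Finset.sum_congr rfl fun j _ => by ring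
        have e2 : (∑ j : Fin 3, A x i j * cross3 (e3 k) (vcurl h x) j) * pd3 i ψ x
            = ∑ j : Fin 3, A x i j * (cross3 (e3 k) (vcurl h x) j * pd3 i ψ x) := by
          rw [Finset.sum_mul]; exact Finset.sum_congr rfl fun j _ => by ring
        rw [hcoord, grad3, add_mul, sub_mul, e1, e2]
        ring
      rw [Finset.sum_congr rfl fun i _ => expand_i i, Finset.sum_add_distrib,
        Finset.sum_sub_distrib]
      congr 1
      have hJ : ∀ i : Fin 3, (Complex.I/ω) * vdiv jm x * (e3 k i * pd3 i ψ x)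
          = (if i = k then (Complex.I/ω) * (vdiv jm x * pd3 i ψ x) else 0) := by
        intro i
        by_cases hik : i = k <;> simp [e3, Pi.single_apply, hik] <;> ring
      rw [Finset.sum_congr rfl fun i _ => hJ i, Finset.sum_ite_eq' Finset.univ k]
      simp
    rw [hfun]
    have ID2 : Integrable (fun x => ∑ i : Fin 3, ∑ j : Fin 3,
        pd3 k (fun y => A y i j) x * (h x j * pd3 i ψ x)) :=
      integrable_finset_sum _ (fun i _ => integrable_finset_sum _ (fun j _ => ID j i))
    have IC2 : Integrable (fun x => ∑ i : Fin 3, ∑ j : Fin 3,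
        A x i j * (cross3 (e3 k) (vcurl h x) j * pd3 i ψ x)) :=
      integrable_finset_sum _ (fun i _ => integrable_finset_sum _ (fun j _ => IC j i))
    have IJ : Integrable (fun x => (Complex.I/ω) * (vdiv jm x * pd3 k ψ x)) :=
      intg continuous_const (hdjm.mul (hPc k).continuous) (hPs k).mul_left
    have ID2C2 : Integrable (fun x => (∑ i : Fin 3, ∑ j : Fin 3,
        pd3 k (fun y => A y i j) x * (h x j * pd3 i ψ x))
        - ∑ i : Fin 3, ∑ j : Fin 3, A x i j * (cross3 (e3 k) (vcurl h x) j * pd3 i ψ x)) :=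
      ID2.sub IC2
    rw [integral_add ID2C2 IJ, integral_sub ID2 IC2,
      integral_finset_sum _ (fun i _ => integrable_finset_sum _ (fun j _ => ID j i)),
      integral_finset_sum _ (fun i _ => integrable_finset_sum _ (fun j _ => IC j i))]
    congr 2
    · exact Finset.sum_congr rfl fun i _ => integral_finset_sum _ (fun j _ => ID j i)
    · exact Finset.sum_congr rfl fun i _ => integral_finset_sum _ (fun j _ => IC j i)
  -- Final assembly
  have L4 : ∀ j i : Fin 3, ∫ x, h x k * pd3 j (fun y => A y i j * pd3 i ψ y) x
      = -(∫ x, A x i j * (cross3 (e3 k) (vcurl h x) j * pd3 i ψ x))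
        - (∫ x, pd3 i (fun y => A y i j * h y j) x * pd3 k ψ x)
        + ∫ x, pd3 k (fun y => A y i j) x * (h x j * pd3 i ψ x) := by
    intro j i
    rw [L2 j i, L3 j i, M1 j i]
    ring
  have hsplit : ∑ j : Fin 3, ∑ i : Fin 3, ∫ x, h x k * pd3 j (fun y => A y i j * pd3 i ψ y) x
      = -(∑ j : Fin 3, ∑ i : Fin 3, ∫ x, A x i j * (cross3 (e3 k) (vcurl h x) j * pd3 i ψ x))
        - (∑ j : Fin 3, ∑ i : Fin 3, ∫ x, pd3 i (fun y => A y i j * h y j) x * pd3 k ψ x)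
        + ∑ j : Fin 3, ∑ i : Fin 3, ∫ x, pd3 k (fun y => A y i j) x * (h x j * pd3 i ψ x) := by
    rw [Finset.sum_congr rfl (fun j _ => Finset.sum_congr rfl fun i _ => L4 j i)]
    simp [Finset.sum_add_distrib, Finset.sum_sub_distrib]
  rw [L1, R1, hsplit, M2, M3]
  have scomm1 : ∑ i : Fin 3, ∑ j : Fin 3, ∫ x, pd3 k (fun y => A y i j) x * (h x j * pd3 i ψ x)
      = ∑ j : Fin 3, ∑ i : Fin 3, ∫ x, pd3 k (fun y => A y i j) x * (h x j * pd3 i ψ x) :=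
    Finset.sum_comm
  have scomm2 : ∑ i : Fin 3, ∑ j : Fin 3,
        ∫ x, A x i j * (cross3 (e3 k) (vcurl h x) j * pd3 i ψ x)
      = ∑ j : Fin 3, ∑ i : Fin 3,
        ∫ x, A x i j * (cross3 (e3 k) (vcurl h x) j * pd3 i ψ x) :=
    Finset.sum_comm
  rw [scomm1, scomm2]
  have hpull1 : ∫ x, (-(Complex.I/ω)) * (vdiv jm x * pd3 k ψ x)
      = (-(Complex.I/ω)) * ∫ x, vdiv jm x * pd3 k ψ x := integral_const_mul _ _
  have hpull2 : ∫ x, (Complex.I/ω) * (vdiv jm x * pd3 k ψ x)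
      = (Complex.I/ω) * ∫ x, vdiv jm x * pd3 k ψ x := integral_const_mul _ _
  rw [hpull1, hpull2]
  ring

/-- Interior very weak identity (2.4) for the components of the magnetic field, tested against
compactly supported C² test functions. -/
theorem stmt_3
    (Ω : Set (Fin 3 → ℝ)) (hΩ : IsOpen Ω) (ω : ℂ) (hω : ω ≠ 0)
    (ε μ : (Fin 3 → ℝ) → Matrix (Fin 3) (Fin 3) ℂ)
    (E H Je Jm : (Fin 3 → ℝ) → Fin 3 → ℂ)
    (hε : ∀ i j, ContDiffOn ℝ 1 (fun x => ε x i j) Ω)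
    (hμ : ∀ i j, ContDiffOn ℝ 1 (fun x => μ x i j) Ω)
    (hE : ContDiffOn ℝ 1 E Ω) (hH : ContDiffOn ℝ 1 H Ω)
    (hJm : ContDiffOn ℝ 1 Jm Ω) (hJe : ContinuousOn Je Ω)
    (hM1 : ∀ x ∈ Ω, vcurl H x = (Complex.I * ω) • (ε x *ᵥ E x) + Je x)
    (hM2 : ∀ x ∈ Ω, vcurl E x = -((Complex.I * ω) • (μ x *ᵥ H x)) + Jm x) :
    ∀ k : Fin 3, ∀ φ : (Fin 3 → ℝ) → ℂ,
      ContDiff ℝ 2 φ → HasCompactSupport φ → tsupport φ ⊆ Ω →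
      ∫ x in Ω, H x k *
          vdiv (fun y => (μ y)ᵀ *ᵥ grad3 (fun z => (starRingEnd ℂ) (φ z)) y) x
        = ∫ x in Ω,
            (mpd3 k μ x *ᵥ H x
              - μ x *ᵥ cross3 (e3 k) (Je x + (Complex.I * ω) • (ε x *ᵥ E x))
              + ((Complex.I / ω) * vdiv Jm x) • e3 k)
            ⬝ᵥ grad3 (fun z => (starRingEnd ℂ) (φ z)) x := by
  intro k φ hφ hφs hφΩ
  set ψ : R3 → ℂ := fun z => (starRingEnd ℂ) (φ z) with hψdef
  have hψ : ContDiff ℝ 2 ψ := Complex.conjCLE.contDiff.comp hφ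
  have hψs : HasCompactSupport ψ := hφs.comp_left (g := (starRingEnd ℂ)) (by simp)
  have hψsupp : tsupport ψ ⊆ tsupport φ := by
    refine closure_mono ?_
    intro x hx
    simp only [hψdef, Function.mem_support, ne_eq, map_eq_zero] at hx ⊢
    exact hx
  -- cutoff construction
  have hK : IsCompact (tsupport φ) := hφs
  obtain ⟨L, hLc, hKL, hLΩ⟩ := exists_compact_between hK hΩ hφΩ
  obtain ⟨L', hL'c, hLL', hL'Ω⟩ := exists_compact_between hLc hΩ hLΩ
  set U : Set R3 := interior L with hUdef
  have hUopen : IsOpen U := isOpen_interior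
  have hUΩ : U ⊆ Ω := interior_subset.trans hLΩ
  have hψU : tsupport ψ ⊆ U := hψsupp.trans hKL
  -- smooth Urysohn function
  obtain ⟨f, hf0, hf1, -⟩ := exists_contMDiffMap_zero_one_of_isClosed (𝓘(ℝ, R3)) (n := 2)
    (isOpen_interior.isClosed_compl : IsClosed (interior L')ᶜ) hLc.isClosed
    (disjoint_compl_left.mono_right hLL')
  set θ : R3 → ℝ := ⇑f with hθdef
  have hθ : ContDiff ℝ 2 θ := by
    have := (contMDiff_iff_contDiff).mp f.contMDiff
    exact this.of_le (by norm_cast)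
  have hθ1 : ∀ x ∈ U, θ x = 1 := fun x hx => hf1 (interior_subset hx)
  have hθsupp : tsupport θ ⊆ L' := by
    refine closure_minimal ?_ hL'c.isClosed
    intro x hx
    by_contra hxc
    exact hx (hf0 (fun hmem : x ∈ interior L' => hxc (interior_subset hmem)))
  have hθΩ : tsupport θ ⊆ Ω := hθsupp.trans hL'Ω
  set c : R3 → ℂ := fun x => ((θ x : ℝ) : ℂ) with hcdef
  have hcc : ContDiff ℝ 1 c := Complex.ofRealCLM.contDiff.comp (hθ.of_le (by norm_num))
  have hc1 : ∀ x ∈ U, c x = 1 := fun x hx => by simp [hcdef, hθ1 x hx]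
  -- gluing lemma
  have glue : ∀ (u : R3 → ℂ), ContDiffOn ℝ 1 u Ω → ContDiff ℝ 1 (fun x => c x * u x) := by
    intro u hu
    rw [contDiff_iff_contDiffAt]
    intro x
    by_cases hx : x ∈ Ω
    · exact (hcc.contDiffAt).mul (hu.contDiffAt (hΩ.mem_nhds hx))
    · have hx' : x ∉ tsupport θ := fun hm => hx (hθΩ hm)
      have hev : (fun y => c y * u y) =ᶠ[nhds x] fun _ => (0:ℂ) := by
        filter_upwards [(isClosed_tsupport θ).isOpen_compl.mem_nhds hx'] with y hy
        simp [hcdef, image_eq_zero_of_notMem_tsupport hy]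
      exact (contDiffAt_const (c := (0:ℂ))).congr_of_eventuallyEq hev
  -- primed fields
  set A' : R3 → Matrix (Fin 3) (Fin 3) ℂ := fun x => Matrix.of fun i j => c x * μ x i j
    with hA'def
  set H' : R3 → Fin 3 → ℂ := fun x i => c x * H x i with hH'def
  set E' : R3 → Fin 3 → ℂ := fun x i => c x * E x i with hE'def
  set Jm' : R3 → Fin 3 → ℂ := fun x i => c x * Jm x i with hJm'def
  have hA' : ∀ i j, ContDiff ℝ 1 (fun x => A' x i j) := fun i j => glue _ (hμ i j)
  have hH' : ∀ i, ContDiff ℝ 1 (fun x => H' x i) := fun i => glue _ (contDiffOn_pi.mp hH i)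
  have hE' : ∀ i, ContDiff ℝ 1 (fun x => E' x i) := fun i => glue _ (contDiffOn_pi.mp hE i)
  have hJm' : ∀ i, ContDiff ℝ 1 (fun x => Jm' x i) := fun i => glue _ (contDiffOn_pi.mp hJm i)
  -- agreement on U
  have hAeq : ∀ x ∈ U, A' x = μ x := by
    intro x hx; ext i j; simp [hA'def, hc1 x hx]
  have hHeq : ∀ x ∈ U, H' x = H x := by
    intro x hx; funext i; simp [hH'def, hc1 x hx]
  have hEeq : ∀ x ∈ U, E' x = E x := by
    intro x hx; funext i; simp [hE'def, hc1 x hx]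
  have hJmeq : ∀ x ∈ U, Jm' x = Jm x := by
    intro x hx; funext i; simp [hJm'def, hc1 x hx]
  -- pd3 agreement on U
  have pdeq : ∀ (u u' : R3 → ℂ), (∀ y ∈ U, u y = u' y) → ∀ x ∈ U, ∀ j, pd3 j u x = pd3 j u' x :=
    fun u u' huu x hx j => pd3_congr (eventuallyEq_of_mem (hUopen.mem_nhds hx) huu) j
  have hcurlE : ∀ x ∈ U, vcurl E' x = vcurl E x := by
    intro x hx
    unfold vcurl
    have h01 : ∀ i : Fin 3, pd3 0 (fun y => E' y i) x = pd3 0 (fun y => E y i) x ∧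
        pd3 1 (fun y => E' y i) x = pd3 1 (fun y => E y i) x ∧
        pd3 2 (fun y => E' y i) x = pd3 2 (fun y => E y i) x := by
      intro i
      refine ⟨?_, ?_, ?_⟩ <;>
        exact pdeq _ _ (fun y hy => by rw [hEeq y hy]) x hx _
    simp [(h01 0).1, (h01 0).2.1, (h01 0).2.2, (h01 1).1, (h01 1).2.1, (h01 1).2.2,
      (h01 2).1, (h01 2).2.1, (h01 2).2.2]
  have hcurlH : ∀ x ∈ U, vcurl H' x = vcurl H x := by
    intro x hx
    unfold vcurl
    have h01 : ∀ i : Fin 3, pd3 0 (fun y => H' y i) x = pd3 0 (fun y => H y i) x ∧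
        pd3 1 (fun y => H' y i) x = pd3 1 (fun y => H y i) x ∧
        pd3 2 (fun y => H' y i) x = pd3 2 (fun y => H y i) x := by
      intro i
      refine ⟨?_, ?_, ?_⟩ <;>
        exact pdeq _ _ (fun y hy => by rw [hHeq y hy]) x hx _
    simp [(h01 0).1, (h01 0).2.1, (h01 0).2.2, (h01 1).1, (h01 1).2.1, (h01 1).2.2,
      (h01 2).1, (h01 2).2.1, (h01 2).2.2]
  -- Maxwell relation for primed fields on U
  have hrel' : ∀ x ∈ U, vcurl E' x = -((Complex.I * ω) • (A' x *ᵥ H' x)) + Jm' x := by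
    intro x hx
    rw [hcurlE x hx, hAeq x hx, hHeq x hx, hJmeq x hx]
    exact hM2 x (hUΩ hx)
  -- apply main identity
  have hmain := main_identity hUopen ω hω A' H' E' Jm' ψ hA' hH' hE' hJm' hψ hψs hψU hrel' k
  -- vanishing off tsupport ψ
  have hgz : ∀ x, x ∉ tsupport ψ → ∀ j, pd3 j ψ x = 0 :=
    fun x hx j => pd3_eq_zero_of_not_mem_tsupport hx j
  have hvdz : ∀ (B : R3 → Matrix (Fin 3) (Fin 3) ℂ), ∀ x, x ∉ tsupport ψ →
      vdiv (fun y => (B y)ᵀ *ᵥ grad3 ψ y) x = 0 := by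
    intro B x hx
    unfold vdiv
    refine Finset.sum_eq_zero fun j _ => ?_
    have hev : (fun y => ((B y)ᵀ *ᵥ grad3 ψ y) j) =ᶠ[nhds x] (fun _ => (0:ℂ)) := by
      filter_upwards [(isClosed_tsupport ψ).isOpen_compl.mem_nhds hx] with y hy
      simp [Matrix.mulVec, dotProduct, grad3, hgz y hy]
    rw [pd3_congr hev j, pd3_zero]
  have hRHS0 : ∀ (v : Fin 3 → ℂ) (x : R3), x ∉ tsupport ψ → v ⬝ᵥ grad3 ψ x = 0 := by
    intro v x hx
    simp [dotProduct, grad3, hgz x hx]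
  have hnotΩ : ∀ x, x ∉ Ω → x ∉ tsupport ψ := fun x hx hm => hx (hUΩ (hψU hm))
  -- main chain
  calc ∫ x in Ω, H x k * vdiv (fun y => (μ y)ᵀ *ᵥ grad3 ψ y) x
      = ∫ x, H x k * vdiv (fun y => (μ y)ᵀ *ᵥ grad3 ψ y) x := by
        refine setIntegral_eq_integral_of_forall_compl_eq_zero fun x hx => ?_
        rw [hvdz μ x (hnotΩ x hx), mul_zero]
    _ = ∫ x, H' x k * vdiv (fun y => (A' y)ᵀ *ᵥ grad3 ψ y) x := by
        refine integral_congr_ae (.of_forall fun x => ?_)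
        beta_reduce
        by_cases hx : x ∈ U
        · have h1 : H x k = H' x k := by rw [hHeq x hx]
          have h2 : vdiv (fun y => (μ y)ᵀ *ᵥ grad3 ψ y) x
              = vdiv (fun y => (A' y)ᵀ *ᵥ grad3 ψ y) x := by
            unfold vdiv
            refine Finset.sum_congr rfl fun j _ => ?_
            refine pdeq _ _ (fun y hy => ?_) x hx j
            beta_reduce
            rw [hAeq y hy]
          rw [h1, h2]
        · have hxs : x ∉ tsupport ψ := fun hm => hx (hψU hm)
          rw [hvdz μ x hxs, hvdz A' x hxs, mul_zero, mul_zero]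
    _ = ∫ x, (mpd3 k A' x *ᵥ H' x - A' x *ᵥ cross3 (e3 k) (vcurl H' x)
          + ((Complex.I / ω) * vdiv Jm' x) • e3 k) ⬝ᵥ grad3 ψ x := hmain
    _ = ∫ x, (mpd3 k μ x *ᵥ H x - μ x *ᵥ cross3 (e3 k) (Je x + (Complex.I * ω) • (ε x *ᵥ E x))
          + ((Complex.I / ω) * vdiv Jm x) • e3 k) ⬝ᵥ grad3 ψ x := by
        refine integral_congr_ae (.of_forall fun x => ?_)
        beta_reduce
        by_cases hx : x ∈ U
        · have h1 : mpd3 k A' x = mpd3 k μ x := by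
            ext i j
            show pd3 k (fun y => A' y i j) x = pd3 k (fun y => μ y i j) x
            exact pdeq _ _ (fun y hy => congrFun (congrFun (hAeq y hy) i) j) x hx k
          have h2 : vcurl H' x = Je x + (Complex.I * ω) • (ε x *ᵥ E x) := by
            rw [hcurlH x hx, hM1 x (hUΩ hx), add_comm]
          have h3 : vdiv Jm' x = vdiv Jm x := by
            unfold vdiv
            refine Finset.sum_congr rfl fun j _ => ?_
            refine pdeq _ _ (fun y hy => ?_) x hx j
            beta_reduce
            rw [hJmeq y hy]
          rw [h1, h2, hAeq x hx, hHeq x hx, h3]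
        · have hxs : x ∉ tsupport ψ := fun hm => hx (hψU hm)
          rw [hRHS0 _ x hxs, hRHS0 _ x hxs]
    _ = ∫ x in Ω, (mpd3 k μ x *ᵥ H x
          - μ x *ᵥ cross3 (e3 k) (Je x + (Complex.I * ω) • (ε x *ᵥ E x))
          + ((Complex.I / ω) * vdiv Jm x) • e3 k) ⬝ᵥ grad3 ψ x := by
        refine (setIntegral_eq_integral_of_forall_compl_eq_zero fun x hx => ?_).symm
        exact hRHS0 _ x (hnotΩ x hx)
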